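/- Let V ⊂ ℝ² be finite with |V| ≥ 2 and pairwise distinct inter-point distances. In the directed nearest-neighbor graph with edge set {⟨i, nn(i)⟩ : i ∈ V}, every weakly connected component contains exactly one 2-cycle, i.e., exactly one unordered pair {i,j} with nn(i) = j and nn(j) = i. -/

import Mathlib

namespace NNAux

variable {V : Finset (EuclideanSpace ℝ (Fin 2))}
  {nn : EuclideanSpace ℝ (Fin 2) → EuclideanSpace ℝ (Fin 2)}

def F (hF : ∀ x ∈ V, nn x ∈ V) (x : {x // x ∈ V}) : {x // x ∈ V} :=
  ⟨nn x.1, hF x.1 x.2⟩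

open Classical in
noncomputable def m (V : Finset (EuclideanSpace ℝ (Fin 2)))
    (nn : EuclideanSpace ℝ (Fin 2) → EuclideanSpace ℝ (Fin 2))
    (x : {x // x ∈ V}) : ℕ :=
  (Finset.univ.filter
    (fun y : {x // x ∈ V} => dist y.1 (nn y.1) < dist x.1 (nn x.1))).card

open Classical in
lemma m_lt (hF : ∀ x ∈ V, nn x ∈ V)
    (hdec : ∀ x : {x // x ∈ V}, nn (nn x.1) ≠ x.1 →
      dist (nn x.1) (nn (nn x.1)) < dist x.1 (nn x.1))
    (x : {x // x ∈ V}) (hx : nn (nn x.1) ≠ x.1) :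
    m V nn (F hF x) < m V nn x := by
  apply Finset.card_lt_card
  constructor
  · intro y hy
    simp only [m, Finset.mem_filter, Finset.mem_univ, true_and] at hy ⊢
    exact hy.trans (hdec x hx)
  · intro hsub
    have h1 : F hF x ∈ Finset.univ.filter
        (fun y : {x // x ∈ V} => dist y.1 (nn y.1) < dist x.1 (nn x.1)) := by
      simp only [Finset.mem_filter, Finset.mem_univ, true_and]
      exact hdec x hx
    have h2 := hsub h1
    simp only [Finset.mem_filter, Finset.mem_univ, true_and] at h2
    exact lt_irrefl _ h2

open Classical in
noncomputable def cyc (hF : ∀ x ∈ V, nn x ∈ V)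
    (hdec : ∀ x : {x // x ∈ V}, nn (nn x.1) ≠ x.1 →
      dist (nn x.1) (nn (nn x.1)) < dist x.1 (nn x.1))
    (x : {x // x ∈ V}) : Sym2 {x // x ∈ V} :=
  if h : nn (nn x.1) = x.1 then Sym2.mk x (F hF x)
  else cyc hF hdec (F hF x)
termination_by m V nn x
decreasing_by exact m_lt hF hdec x h

lemma cyc_of_mutual (hF : ∀ x ∈ V, nn x ∈ V)
    (hdec : ∀ x : {x // x ∈ V}, nn (nn x.1) ≠ x.1 →
      dist (nn x.1) (nn (nn x.1)) < dist x.1 (nn x.1))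
    {x : {x // x ∈ V}} (h : nn (nn x.1) = x.1) :
    cyc hF hdec x = Sym2.mk x (F hF x) := by
  rw [cyc]; simp [h]

lemma cyc_of_not (hF : ∀ x ∈ V, nn x ∈ V)
    (hdec : ∀ x : {x // x ∈ V}, nn (nn x.1) ≠ x.1 →
      dist (nn x.1) (nn (nn x.1)) < dist x.1 (nn x.1))
    {x : {x // x ∈ V}} (h : nn (nn x.1) ≠ x.1) :
    cyc hF hdec x = cyc hF hdec (F hF x) := by
  rw [cyc]; simp [h]

lemma cyc_step (hF : ∀ x ∈ V, nn x ∈ V)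
    (hdec : ∀ x : {x // x ∈ V}, nn (nn x.1) ≠ x.1 →
      dist (nn x.1) (nn (nn x.1)) < dist x.1 (nn x.1))
    {a b : {x // x ∈ V}} (h1 : nn a.1 = b.1) :
    cyc hF hdec a = cyc hF hdec b := by
  have hFa : F hF a = b := Subtype.ext h1
  by_cases h2 : nn b.1 = a.1
  · have ha : nn (nn a.1) = a.1 := by rw [h1]; exact h2
    have hb : nn (nn b.1) = b.1 := by rw [h2]; exact h1
    have hFb : F hF b = a := Subtype.ext h2
    rw [cyc_of_mutual hF hdec ha, cyc_of_mutual hF hdec hb, hFa, hFb]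
    exact Sym2.eq_swap
  · have ha : nn (nn a.1) ≠ a.1 := by rw [h1]; exact h2
    rw [cyc_of_not hF hdec ha, hFa]

lemma cyc_reach (hF : ∀ x ∈ V, nn x ∈ V)
    (hdec : ∀ x : {x // x ∈ V}, nn (nn x.1) ≠ x.1 →
      dist (nn x.1) (nn (nn x.1)) < dist x.1 (nn x.1))
    {a b : {x // x ∈ V}}
    (h : (SimpleGraph.fromRel
        (fun a b : {x // x ∈ V} => nn a.1 = b.1)).Reachable a b) :
    cyc hF hdec a = cyc hF hdec b := by
  obtain ⟨w⟩ := h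
  induction w with
  | nil => rfl
  | cons hadj p ih =>
    rw [SimpleGraph.fromRel_adj] at hadj
    rcases hadj.2 with h1 | h1
    · exact (cyc_step hF hdec h1).trans ih
    · exact ((cyc_step hF hdec h1).symm).trans ih

lemma mutual_exists (hF : ∀ x ∈ V, nn x ∈ V)
    (hdec : ∀ x : {x // x ∈ V}, nn (nn x.1) ≠ x.1 →
      dist (nn x.1) (nn (nn x.1)) < dist x.1 (nn x.1))
    (hne : ∀ x : {x // x ∈ V}, nn x.1 ≠ x.1)
    (x : {x // x ∈ V}) :
    ∃ z : {x // x ∈ V}, nn (nn z.1) = z.1 ∧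
      (SimpleGraph.fromRel
        (fun a b : {x // x ∈ V} => nn a.1 = b.1)).Reachable x z := by
  by_cases h : nn (nn x.1) = x.1
  · exact ⟨x, h, SimpleGraph.Reachable.refl x⟩
  · obtain ⟨z, hz, hr⟩ := mutual_exists hF hdec hne (F hF x)
    refine ⟨z, hz, SimpleGraph.Reachable.trans ?_ hr⟩
    refine SimpleGraph.Adj.reachable ?_
    rw [SimpleGraph.fromRel_adj]
    exact ⟨fun he => hne x (congrArg Subtype.val he.symm), Or.inl rfl⟩
termination_by m V nn x
decreasing_by exact m_lt hF hdec x h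

end NNAux

/-- Every weakly connected component of the directed nearest-neighbor graph
contains exactly one mutual nearest-neighbor pair (biroot), unique up to swap. -/
theorem stmt_5 (V : Finset (EuclideanSpace ℝ (Fin 2))) (hV : 2 ≤ V.card)
    (hdist : ∀ i ∈ V, ∀ j ∈ V, ∀ k ∈ V, ∀ l ∈ V,
      i ≠ j → k ≠ l → dist i j = dist k l → (i = k ∧ j = l) ∨ (i = l ∧ j = k))
    (nn : EuclideanSpace ℝ (Fin 2) → EuclideanSpace ℝ (Fin 2))
    (hnn : ∀ i ∈ V, nn i ∈ V ∧ nn i ≠ i ∧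
      ∀ j ∈ V, j ≠ i → dist i (nn i) ≤ dist i j) :
    ∀ c : (SimpleGraph.fromRel
        (fun a b : {x // x ∈ V} => nn a.1 = b.1)).ConnectedComponent,
      ∃ i j : {x // x ∈ V},
        nn i.1 = j.1 ∧ nn j.1 = i.1 ∧
        (SimpleGraph.fromRel
          (fun a b : {x // x ∈ V} => nn a.1 = b.1)).connectedComponentMk i = c ∧
        ∀ i' j' : {x // x ∈ V},
          nn i'.1 = j'.1 → nn j'.1 = i'.1 →
          (SimpleGraph.fromRel
            (fun a b : {x // x ∈ V} => nn a.1 = b.1)).connectedComponentMk i' = c →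
          (i' = i ∧ j' = j) ∨ (i' = j ∧ j' = i) := by
  have hF : ∀ x ∈ V, nn x ∈ V := fun x hx => (hnn x hx).1
  have hne : ∀ x : {x // x ∈ V}, nn x.1 ≠ x.1 := fun x => (hnn x.1 x.2).2.1
  have hdec : ∀ x : {x // x ∈ V}, nn (nn x.1) ≠ x.1 →
      dist (nn x.1) (nn (nn x.1)) < dist x.1 (nn x.1) := by
    intro x hx
    obtain ⟨hb, hbne, hmin⟩ := hnn x.1 x.2
    obtain ⟨hb2, hbne2, hmin2⟩ := hnn (nn x.1) hb
    have hle : dist (nn x.1) (nn (nn x.1)) ≤ dist (nn x.1) x.1 :=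
      hmin2 x.1 x.2 (Ne.symm hbne)
    have hneq : dist (nn x.1) (nn (nn x.1)) ≠ dist (nn x.1) x.1 := by
      intro heq
      rcases hdist (nn x.1) hb (nn (nn x.1)) hb2 (nn x.1) hb x.1 x.2
        (Ne.symm hbne2) hbne heq with ⟨_, h⟩ | ⟨h, _⟩
      · exact hx h
      · exact hbne h
    calc dist (nn x.1) (nn (nn x.1)) < dist (nn x.1) x.1 := lt_of_le_of_ne hle hneq
      _ = dist x.1 (nn x.1) := dist_comm _ _
  intro c
  obtain ⟨x, hx⟩ := c.exists_rep
  obtain ⟨z, hz, hr⟩ := NNAux.mutual_exists hF hdec hne x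
  have hmkz : (SimpleGraph.fromRel
      (fun a b : {x // x ∈ V} => nn a.1 = b.1)).connectedComponentMk z = c := by
    rw [← hx]
    exact (SimpleGraph.ConnectedComponent.sound hr).symm
  refine ⟨z, NNAux.F hF z, rfl, hz, hmkz, ?_⟩
  intro i' j' h1 h2 hc
  have hFi' : NNAux.F hF i' = j' := Subtype.ext h1
  have hreach : (SimpleGraph.fromRel
      (fun a b : {x // x ∈ V} => nn a.1 = b.1)).Reachable i' z :=
    (SimpleGraph.ConnectedComponent.exact (hc.trans hmkz.symm))
  have hcyc := NNAux.cyc_reach hF hdec hreach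
  have hmi' : nn (nn i'.1) = i'.1 := by rw [h1]; exact h2
  rw [NNAux.cyc_of_mutual hF hdec hmi', NNAux.cyc_of_mutual hF hdec hz, hFi'] at hcyc
  have := Sym2.eq_iff.mp hcyc
  tauto
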